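/- arXiv:0802.2918 — 4 statements merged into one kernel-verified Lean document; each statement's English description precedes it below -/
import Mathlib

section
/- Let k be a field of characteristic p > 0, V a finite-dimensional k[t]/(t^p)-module, and for 1 ≤ j ≤ p−1 set V^{[j]} = Ker(t^j : V → V) / Im(t^{p−j} : V → V). Then V^{[j]} and V^{[p−j]} have the same dimension over k. -/
lemma aux_range_le_ker {k V : Type*} [Field k] [AddCommGroup V] [Module k V]
    (f : Module.End k V) (c d : ℕ) (h : f ^ (c + d) = 0) :
    LinearMap.range (f ^ d) ≤ LinearMap.ker (f ^ c) := by
  rintro x ⟨y, rfl⟩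
  show (f ^ c) ((f ^ d) y) = 0
  rw [← Module.End.mul_apply, ← pow_add, h]
  rfl

lemma aux_quot {k V : Type*} [Field k] [AddCommGroup V] [Module k V]
    [FiniteDimensional k V] (f : Module.End k V) (c d : ℕ) (h : f ^ (c + d) = 0) :
    Module.finrank k
        (↥(LinearMap.ker (f ^ c)) ⧸
          (LinearMap.range (f ^ d)).comap (LinearMap.ker (f ^ c)).subtype)
      + Module.finrank k (LinearMap.range (f ^ d))
      = Module.finrank k (LinearMap.ker (f ^ c)) := by
  have hle := aux_range_le_ker f c d h
  have e := Submodule.comapSubtypeEquivOfLe hle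
  rw [← LinearEquiv.finrank_eq e]
  exact Submodule.finrank_quotient_add_finrank _

theorem stmt7 {k : Type*} [Field k] {p : ℕ} [Fact p.Prime] [CharP k p]
    {V : Type*} [AddCommGroup V] [Module k V] [FiniteDimensional k V]
    (f : Module.End k V) (hf : f ^ p = 0)
    (j : ℕ) (hj1 : 1 ≤ j) (hj2 : j ≤ p - 1) :
    Module.finrank k
        (↥(LinearMap.ker (f ^ j)) ⧸
          (LinearMap.range (f ^ (p - j))).comap (LinearMap.ker (f ^ j)).subtype) =
      Module.finrank k
        (↥(LinearMap.ker (f ^ (p - j))) ⧸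
          (LinearMap.range (f ^ j)).comap (LinearMap.ker (f ^ (p - j))).subtype) := by
  have hp : 1 ≤ p := (Fact.out : p.Prime).one_lt.le.trans' (by norm_num)
  have hjp : j ≤ p := hj2.trans (Nat.sub_le p 1)
  have h1 : j + (p - j) = p := by omega
  have h2 : (p - j) + j = p := by omega
  have q1 := aux_quot f j (p - j) (by rw [h1]; exact hf)
  have q2 := aux_quot f (p - j) j (by rw [h2]; exact hf)
  have r1 := LinearMap.finrank_range_add_finrank_ker (f ^ j)
  have r2 := LinearMap.finrank_range_add_finrank_ker (f ^ (p - j))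
  omega
end

section
/- Let R be a commutative local ring with residue field k, let p ≥ 1, and let M be a finitely generated module over R[t]/(t^p) which is free as an R-module. If M ⊗_R k is free as a k[t]/(t^p)-module, then M is free as an R[t]/(t^p)-module. -/
open TensorProduct

/-- A module `M` over a commutative ring `R`, equipped with an `R`-linear
endomorphism `f` (thought of as the action of `t`, with `f ^ p = 0`), is free as
a module over `R[t]/(t^p)` iff there is a family `b : ι → M` such that the
elements `f^j (b i)`, `0 ≤ j < p`, form an `R`-basis of `M`. -/
def IsFreeTrunc (R : Type*) [CommRing R] {M : Type*} [AddCommGroup M] [Module R M]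
    (p : ℕ) (f : Module.End R M) : Prop :=
  ∃ (ι : Type) (b : ι → M) (B : Module.Basis (ι × Fin p) R M),
    ∀ (i : ι) (j : Fin p), B (i, j) = (f ^ (j : ℕ)) (b i)

theorem stmt9 {R : Type*} [CommRing R] [IsLocalRing R] {p : ℕ} (hp : 1 ≤ p)
    {M : Type*} [AddCommGroup M] [Module R M] [Module.Finite R M] [Module.Free R M]
    (f : Module.End R M) (hf : f ^ p = 0)
    (h : IsFreeTrunc (IsLocalRing.ResidueField R) p
      (LinearMap.baseChange (IsLocalRing.ResidueField R) f)) :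
    IsFreeTrunc R p f := by
  classical
  set k := IsLocalRing.ResidueField R
  obtain ⟨ι, bb, B, hB⟩ := h
  -- surjectivity of M → k ⊗ M
  have hsur : Function.Surjective (algebraMap R k) := Ideal.Quotient.mk_surjective
  have hmk : Function.Surjective (TensorProduct.mk R k M 1) :=
    TensorProduct.mk_surjective R M k hsur
  -- lift bb
  choose b hb using fun i => hmk (bb i)
  set v : ι × Fin p → M := fun x => (f ^ (x.2 : ℕ)) (b x.1) with hv
  set φ : M →ₗ[R] k ⊗[R] M := TensorProduct.mk R k M 1 with hφ
  have hφv : ∀ x : ι × Fin p, φ (v x) = B x := by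
    rintro ⟨i, j⟩
    calc φ (v (i, j)) = (1 : k) ⊗ₜ[R] (f ^ (j : ℕ)) (b i) := rfl
      _ = (LinearMap.baseChange k (f ^ (j : ℕ))) ((1 : k) ⊗ₜ[R] b i) := by
          rw [LinearMap.baseChange_tmul]
      _ = ((LinearMap.baseChange k f) ^ (j : ℕ)) (φ (b i)) := by
          rw [LinearMap.baseChange_pow R k M f (j : ℕ)]; rfl
      _ = B (i, j) := by rw [hb i, ← hB]
  -- span
  have hspan : Submodule.span R (Set.range v) = ⊤ := by
    have h1 : Submodule.span R (φ '' Set.range v) = ⊤ := by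
      have : φ '' Set.range v = Set.range B := by
        rw [← Set.range_comp]
        exact congrArg Set.range (funext hφv)
      rw [this, ← Submodule.restrictScalars_span R k hsur,
        B.span_eq, Submodule.restrictScalars_top]
    rw [← top_le_iff]
    apply Submodule.le_of_le_smul_of_le_jacobson_bot
      (I := IsLocalRing.maximalIdeal R) (Module.finite_def.mp ‹_›)
      (IsLocalRing.jacobson_eq_maximalIdeal ⊥ bot_ne_top).ge
    intro x _
    have hx : φ x ∈ Submodule.map φ (Submodule.span R (Set.range v)) := by
      rw [Submodule.map_span]; rw [h1]; exact Submodule.mem_top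
    obtain ⟨y, hy, hyx⟩ := hx
    have hker : x - y ∈ IsLocalRing.maximalIdeal R • (⊤ : Submodule R M) := by
      have h0 : φ (x - y) = 0 := by rw [map_sub, hyx, sub_self]
      have := congrArg (TensorProduct.quotTensorEquivQuotSMul M
        (IsLocalRing.maximalIdeal R)) h0
      erw [map_zero] at this
      have h2 : (TensorProduct.quotTensorEquivQuotSMul M (IsLocalRing.maximalIdeal R))
          (φ (x - y)) = Submodule.Quotient.mk (x - y) := by
        show (TensorProduct.quotTensorEquivQuotSMul M (IsLocalRing.maximalIdeal R))
          ((Ideal.Quotient.mk _ (1 : R)) ⊗ₜ[R] (x - y)) = _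
        rw [TensorProduct.quotTensorEquivQuotSMul_mk_tmul, one_smul]
      rw [h2] at this
      exact (Submodule.Quotient.mk_eq_zero _).mp this
    have : x = y + (x - y) := by abel
    rw [this]
    exact Submodule.add_mem_sup hy hker
  -- the linear combination map
  set g : ((ι × Fin p) →₀ R) →ₗ[R] M := Finsupp.linearCombination R v with hg
  have gsur : Function.Surjective g := by
    rw [← LinearMap.range_eq_top, Finsupp.range_linearCombination, hspan]
  -- injectivity via Orzech
  set C : Module.Basis (Module.Free.ChooseBasisIndex R M) R M := Module.Free.chooseBasis R M
  have e : Module.Free.ChooseBasisIndex R M ≃ ι × Fin p :=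
    ((Module.Free.chooseBasis R M).baseChange (IsLocalRing.ResidueField R)).indexEquiv B
  set ψ : M →ₗ[R] M := g ∘ₗ (Finsupp.domLCongr (R := R) (M := R) e).toLinearMap ∘ₗ C.repr.toLinearMap
  have hψ : Function.Surjective ψ := by
    intro x
    obtain ⟨y, hy⟩ := gsur x
    refine ⟨C.repr.symm ((Finsupp.domLCongr (R := R) (M := R) e).symm y), ?_⟩
    show g ((Finsupp.domLCongr (R := R) (M := R) e) (C.repr (C.repr.symm ((Finsupp.domLCongr (R := R) (M := R) e).symm y)))) = x
    rw [LinearEquiv.apply_symm_apply, LinearEquiv.apply_symm_apply, hy]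
  have ginj : Function.Injective g := by
    have hinj := OrzechProperty.injective_of_surjective_endomorphism ψ hψ
    have key : ∀ z : (ι × Fin p) →₀ R,
        ψ (C.repr.symm ((Finsupp.domLCongr (R := R) (M := R) e).symm z)) = g z := by
      intro z
      show g ((Finsupp.domLCongr (R := R) (M := R) e) (C.repr (C.repr.symm
        ((Finsupp.domLCongr (R := R) (M := R) e).symm z)))) = g z
      rw [LinearEquiv.apply_symm_apply, LinearEquiv.apply_symm_apply]
    intro a a' haa
    have h2 : ψ (C.repr.symm ((Finsupp.domLCongr (R := R) (M := R) e).symm a)) =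
        ψ (C.repr.symm ((Finsupp.domLCongr (R := R) (M := R) e).symm a')) := by
      rw [key, key, haa]
    have h3 := C.repr.symm.injective (hinj h2)
    exact (Finsupp.domLCongr (R := R) (M := R) e).symm.injective h3
  refine ⟨ι, b, Module.Basis.ofRepr (LinearEquiv.ofBijective g ⟨ginj, gsur⟩).symm, ?_⟩
  intro i j
  show (LinearEquiv.ofBijective g ⟨ginj, gsur⟩) (Finsupp.single (i, j) 1) = _
  show g (Finsupp.single (i, j) 1) = _
  simp [g, Finsupp.linearCombination_single, v]
end

section
/- Let R be a reduced commutative local Noetherian ring and M a finitely generated R-module. If the function p ↦ dim_{κ(p)} (M ⊗_R κ(p)) is constant as p ranges over all prime ideals of R (where κ(p) is the residue field at p), then M is a free R-module. -/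
open TensorProduct IsLocalRing Function

section aux
variable {R : Type*} [CommRing R]

lemma auxAlgebraMapComp (p : Ideal R) [p.IsPrime] :
    algebraMap R (ResidueField (Localization.AtPrime p))
      = (residue (Localization.AtPrime p)).comp (algebraMap R (Localization.AtPrime p)) := by
  rw [IsScalarTower.algebraMap_eq R (Localization.AtPrime p)
    (ResidueField (Localization.AtPrime p)), IsLocalRing.ResidueField.algebraMap_eq]

lemma auxMemOfZero (p : Ideal R) [p.IsPrime] (r : R)
    (hr : algebraMap R (ResidueField (Localization.AtPrime p)) r = 0) : r ∈ p := by
  rw [auxAlgebraMapComp, RingHom.comp_apply] at hr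
  rw [← Localization.AtPrime.comap_maximalIdeal (I := p), Ideal.mem_comap]
  exact Ideal.Quotient.eq_zero_iff_mem.mp hr

lemma auxFinrankMax [IsLocalRing R] {M : Type*} [AddCommGroup M] [Module R M]
    [Module.Finite R M] :
    Module.finrank (ResidueField (Localization.AtPrime (maximalIdeal R)))
        (ResidueField (Localization.AtPrime (maximalIdeal R)) ⊗[R] M)
      = Module.finrank (ResidueField R) (ResidueField R ⊗[R] M) := by
  haveI : IsLocalHom (algebraMap R (ResidueField (Localization.AtPrime (maximalIdeal R)))) := by
    constructor
    intro a ha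
    by_contra hnu
    have hmem : a ∈ maximalIdeal R := hnu
    have hmem2 : algebraMap R (Localization.AtPrime (maximalIdeal R)) a
        ∈ maximalIdeal (Localization.AtPrime (maximalIdeal R)) := by
      rw [← Ideal.mem_comap, ← Ideal.under_def, Localization.AtPrime.comap_maximalIdeal]; exact hmem
    have h0 : algebraMap R (ResidueField (Localization.AtPrime (maximalIdeal R))) a = 0 := by
      rw [auxAlgebraMapComp, RingHom.comp_apply]
      exact Ideal.Quotient.eq_zero_iff_mem.mpr hmem2
    rw [h0] at ha
    exact not_isUnit_zero ha
  letI : Algebra (ResidueField R) (ResidueField (Localization.AtPrime (maximalIdeal R))) :=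
    (IsLocalRing.ResidueField.lift
      (algebraMap R (ResidueField (Localization.AtPrime (maximalIdeal R))))).toAlgebra
  haveI : IsScalarTower R (ResidueField R)
      (ResidueField (Localization.AtPrime (maximalIdeal R))) :=
    IsScalarTower.of_algebraMap_eq' (by
      rw [RingHom.algebraMap_toAlgebra, IsLocalRing.ResidueField.algebraMap_eq,
        IsLocalRing.ResidueField.lift_comp_residue])
  have e1 : ResidueField (Localization.AtPrime (maximalIdeal R))
        ⊗[ResidueField R] (ResidueField R ⊗[R] M)
      ≃ₗ[ResidueField (Localization.AtPrime (maximalIdeal R))]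
      ResidueField (Localization.AtPrime (maximalIdeal R)) ⊗[R] M :=
    AlgebraTensorModule.cancelBaseChange R (ResidueField R)
      (ResidueField (Localization.AtPrime (maximalIdeal R)))
      (ResidueField (Localization.AtPrime (maximalIdeal R))) M
  rw [← e1.finrank_eq, Module.finrank_baseChange]

end aux

set_option synthInstance.maxHeartbeats 800000 in
set_option maxHeartbeats 1600000 in
theorem stmt10 {R : Type*} [CommRing R] [IsLocalRing R] [IsNoetherianRing R]
    [IsReduced R] {M : Type*} [AddCommGroup M] [Module R M] [Module.Finite R M]
    (n : ℕ)
    (h : ∀ P : PrimeSpectrum R,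
      Module.finrank (IsLocalRing.ResidueField (Localization.AtPrime P.asIdeal))
        (IsLocalRing.ResidueField (Localization.AtPrime P.asIdeal) ⊗[R] M) = n) :
    Module.Free R M := by
  classical
  have hA : Module.finrank (ResidueField R) (ResidueField R ⊗[R] M) = n := by
    rw [← auxFinrankMax]; exact h ⟨maximalIdeal R, inferInstance⟩
  let b : Module.Basis (Fin n) (ResidueField R) (ResidueField R ⊗[R] M) :=
    Module.finBasisOfFinrankEq (ResidueField R) (ResidueField R ⊗[R] M) hA
  choose f hf using TensorProduct.mk_surjective R M (ResidueField R) Ideal.Quotient.mk_surjective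
  let i : (Fin n → R) →ₗ[R] M := Fintype.linearCombination R (f ∘ b)
  have hi : Function.Surjective i := by
    rw [← LinearMap.range_eq_top, Fintype.range_linearCombination]
    exact IsLocalRing.span_eq_top_of_tmul_eq_basis (R := R) (f := f ∘ b) b (fun _ ↦ hf _)
  suffices hker : Function.Injective i by
    exact Module.Free.of_equiv (LinearEquiv.ofBijective i ⟨hker, hi⟩)
  rw [← LinearMap.ker_eq_bot, eq_bot_iff]
  intro x hx
  have hx0 : i x = 0 := LinearMap.mem_ker.mp hx
  -- each component of x lies in every prime
  have hxj : ∀ (P : PrimeSpectrum R) (j : Fin n), x j ∈ P.asIdeal := by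
    intro P j
    set κ := ResidueField (Localization.AtPrime P.asIdeal) with hκdef
    have hsurj : Function.Surjective (i.baseChange κ) := by
      rw [LinearMap.baseChange_eq_ltensor]
      exact LinearMap.lTensor_surjective κ hi
    have hrank : Module.finrank κ (κ ⊗[R] (Fin n → R)) = Module.finrank κ (κ ⊗[R] M) := by
      rw [h P, Module.finrank_eq_card_basis ((Pi.basisFun R (Fin n)).baseChange κ),
        Fintype.card_fin]
    have hinj : Function.Injective (i.baseChange κ) :=
      (LinearMap.injective_iff_surjective_of_finrank_eq_finrank hrank).mpr hsurj
    have h0 : (1 : κ) ⊗ₜ[R] x = (0 : TensorProduct R κ (Fin n → R)) := by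
      apply hinj
      rw [map_zero, LinearMap.baseChange_tmul, hx0, tmul_zero]
    have h1 := congrArg (fun y => ((Pi.basisFun R (Fin n)).baseChange κ).repr y j) h0
    simp only [Module.Basis.baseChange_repr_tmul, Pi.basisFun_repr, map_zero,
      Finsupp.coe_zero, Pi.zero_apply, Algebra.smul_def, mul_one] at h1
    exact auxMemOfZero P.asIdeal (x j) h1
  have hx0' : x = 0 := by
    funext j
    have hnil : x j ∈ nilradical R := by
      rw [nilradical_eq_sInf, Submodule.mem_sInf]
      intro J hJ
      haveI : Ideal.IsPrime J := hJ
      exact hxj ⟨J, hJ⟩ j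
    rw [nilradical_eq_zero] at hnil
    simpa using hnil
  simp [hx0']
end

section
/- Let k be a field of characteristic p > 0, let 0 ≤ m ≤ p−1, and let V_m be the (m+1)-dimensional k-vector space with basis v_0, …, v_m. Define operators e, f, h on V_m by e·v_i = (i+1)v_{i+1} (with e·v_m = 0), f·v_i = (m−i+1)v_{i−1} (with f·v_0 = 0), and h·v_i = (2i−m)v_i. Let Θ = s²·e − t²·f + st·h acting k[s,t]-linearly on V_m ⊗_k k[s,t]. Then the element w_m = Σ_{i=0}^{m} (−1)^i s^i t^{m−i} (v_i ⊗ 1) satisfies Θ(w_m) = 0. -/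
noncomputable section

/-- The operator `Θ = s²·e − t²·f + st·h` acting `k[s,t]`-linearly on
`V_m ⊗_k k[s,t]`, where `V_m` has basis `v_0, …, v_m` and
`e ⬝ v_i = (i+1) v_{i+1}` (`e ⬝ v_m = 0`), `f ⬝ v_i = (m−i+1) v_{i−1}`
(`f ⬝ v_0 = 0`), `h ⬝ v_i = (2i−m) v_i`.  In coordinates, the `v_i`-component of
`Θ w` is `s² · i · w_{i−1} − t² · (m−i) · w_{i+1} + st · (2i−m) · w_i`
(the boundary cases being forced by the vanishing coefficients).
Here `s = X 0`, `t = X 1` in `k[s,t] = MvPolynomial (Fin 2) k`. -/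
def thetaSL2 (k : Type*) [Field k] (m : ℕ) :
    (Fin (m + 1) → MvPolynomial (Fin 2) k) →ₗ[MvPolynomial (Fin 2) k]
      (Fin (m + 1) → MvPolynomial (Fin 2) k) where
  toFun w := fun i =>
    MvPolynomial.X 0 ^ 2 *
        (((i : ℕ) : MvPolynomial (Fin 2) k) *
          w ⟨(i : ℕ) - 1, by have := i.isLt; omega⟩) -
      MvPolynomial.X 1 ^ 2 *
        (((m - (i : ℕ) : ℕ) : MvPolynomial (Fin 2) k) *
          w ⟨min ((i : ℕ) + 1) m, by omega⟩) +
      (MvPolynomial.X 0 * MvPolynomial.X 1) *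
        ((((2 * (i : ℕ) : ℕ) : MvPolynomial (Fin 2) k) - ((m : ℕ) : MvPolynomial (Fin 2) k)) * w i)
  map_add' a b := by funext i; simp; ring
  map_smul' c a := by funext i; simp; ring

theorem stmt14 {k : Type*} [Field k] {p : ℕ} [Fact p.Prime] [CharP k p]
    (m : ℕ) (hm : m ≤ p - 1) :
    thetaSL2 k m
        (fun i => (-1) ^ (i : ℕ) * MvPolynomial.X 0 ^ (i : ℕ) *
          MvPolynomial.X 1 ^ (m - (i : ℕ))) = 0 := by
  funext i
  obtain ⟨n, hn⟩ := i
  simp only [thetaSL2, LinearMap.coe_mk, AddHom.coe_mk, Pi.zero_apply, Fin.val_mk]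
  rcases Nat.lt_or_ge n m with hlt | hge
  · -- n < m
    rw [min_eq_left (by omega)]
    rcases Nat.eq_zero_or_pos n with h0 | h0
    · subst h0
      obtain ⟨b, rfl⟩ : ∃ b, m = b + 1 := ⟨m - 1, by omega⟩
      simp only [Nat.zero_sub, pow_zero, Nat.sub_zero, zero_add,
        show b + 1 - 1 = b from rfl, Nat.mul_zero, Nat.cast_zero]
      push_cast
      ring_nf
    · obtain ⟨a, rfl⟩ : ∃ a, n = a + 1 := ⟨n - 1, by omega⟩
      obtain ⟨b, rfl⟩ : ∃ b, m = a + b + 2 := ⟨m - a - 2, by omega⟩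
      simp only [show a + 1 - 1 = a from rfl,
        show a + b + 2 - a = b + 2 by omega,
        show a + b + 2 - (a + 1) = b + 1 by omega,
        show a + b + 2 - (a + 1 + 1) = b by omega]
      push_cast
      ring_nf
  · -- n = m
    have hnm : n = m := by omega
    subst hnm
    rw [min_eq_right (by omega)]
    rcases Nat.eq_zero_or_pos n with h0 | h0
    · subst h0; simp
    · obtain ⟨a, rfl⟩ : ∃ a, n = a + 1 := ⟨n - 1, by omega⟩
      simp only [show a + 1 - 1 = a from rfl, Nat.sub_self,
        show a + 1 - a = 1 by omega, pow_zero, pow_one]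
      push_cast
      ring

end
end
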